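/- Let G be the m×n rectangle grid graph and let G' be G with an extra edge e between E = (x_E, y_E) and F = (x_F, y_F) satisfying: d_G(E,F) ≥ 2; x_F ≤ x_E, y_E ≤ y_F, x_E − x_F ≤ y_F − y_E; x_F ≠ x_E; Gain' ≥ 2; and neither E nor F lies on the boundary of the grid. Let α = (1 + y_F + y_E + x_F − x_E)/2 and β = (1 + y_F + y_E + x_E − x_F)/2. Then the normal region of G' is exactly N = {(x,y) : x < x_F, α − 1 ≤ y ≤ α} ∪ {(x,y) : x_F ≤ x ≤ x_E, x_F − α ≤ x − y ≤ x_F − α + 1} ∪ {(x,y) : x > x_E, β − 1 ≤ y ≤ β}. -/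

import Mathlib

/-- A set `R` of vertices resolves the graph `H` if every pair of distinct
vertices is distinguished by some vertex of `R`. -/
def resolves {V : Type*} (H : SimpleGraph V) (R : Set V) : Prop :=
  ∀ a b : V, a ≠ b → ∃ x ∈ R, H.dist a x ≠ H.dist b x

/-- The metric dimension: the least cardinality of a (finite) resolving set. -/
noncomputable def metricDim {V : Type*} (H : SimpleGraph V) : ℕ :=
  sInf {k | ∃ R : Finset V, R.card = k ∧ resolves H (R : Set V)}

/-- The rectangle grid graph with `n` columns and `m` rows: the vertex `(i, j)`
(with `i : Fin n`, `j : Fin m`) represents the grid point in column `i + 1` and row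
`j + 1`; two vertices are adjacent when they differ by exactly 1 in exactly one
coordinate, i.e. when their ℓ¹ distance is 1. -/
def grid2 (n m : ℕ) : SimpleGraph (Fin n × Fin m) where
  Adj a b := |((a.1 : ℕ) : ℤ) - ((b.1 : ℕ) : ℤ)| + |((a.2 : ℕ) : ℤ) - ((b.2 : ℕ) : ℤ)| = 1
  symm := by
    constructor
    intro a b h
    rw [abs_sub_comm ((b.1 : ℕ) : ℤ), abs_sub_comm ((b.2 : ℕ) : ℤ)]
    exact h
  loopless := by constructor; intro a h; simp at h

/-- The special region of `A`: vertices whose distance to `A` decreased from `G` to `G'`. -/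
def specialRegion {V : Type*} (G G' : SimpleGraph V) (A : V) : Set V :=
  {Z | G'.dist Z A < G.dist Z A}

/-- The normal region: vertices with empty special region. -/
def normalRegion {V : Type*} (G G' : SimpleGraph V) : Set V :=
  {Z | specialRegion G G' Z = ∅}

/-- The (1-indexed) column coordinate of a grid vertex, as a rational number. -/
def Xc {n m : ℕ} (v : Fin n × Fin m) : ℚ := ((v.1 : ℕ) : ℚ) + 1

/-- The (1-indexed) row coordinate of a grid vertex, as a rational number. -/
def Yc {n m : ℕ} (v : Fin n × Fin m) : ℚ := ((v.2 : ℕ) : ℚ) + 1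

/-- `v` lies on the boundary of the grid. -/
def onBoundary {n m : ℕ} (v : Fin n × Fin m) : Prop :=
  (v.1 : ℕ) = 0 ∨ (v.1 : ℕ) = n - 1 ∨ (v.2 : ℕ) = 0 ∨ (v.2 : ℕ) = m - 1


section AuxGridProof

def l1 {n m : ℕ} (u v : Fin n × Fin m) : ℕ :=
  (((u.1 : ℕ) : ℤ) - ((v.1 : ℕ) : ℤ)).natAbs + (((u.2 : ℕ) : ℤ) - ((v.2 : ℕ) : ℤ)).natAbs

lemma grid2_adj_iff {n m : ℕ} {u v : Fin n × Fin m} :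
    (grid2 n m).Adj u v ↔ l1 u v = 1 := by
  show |((u.1 : ℕ) : ℤ) - ((v.1 : ℕ) : ℤ)| + |((u.2 : ℕ) : ℤ) - ((v.2 : ℕ) : ℤ)| = 1 ↔ _
  unfold l1
  rw [Int.abs_eq_natAbs, Int.abs_eq_natAbs]
  omega

lemma l1_triangle {n m : ℕ} (u w v : Fin n × Fin m) : l1 u v ≤ l1 u w + l1 w v := by
  unfold l1; omega

lemma l1_walk_le {n m : ℕ} {u v : Fin n × Fin m} (p : (grid2 n m).Walk u v) :
    l1 u v ≤ p.length := by
  induction p with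
  | nil => simp [l1]
  | @cons a b c h p ih =>
    have h1 := grid2_adj_iff.mp h
    have h2 := l1_triangle a b c
    rw [SimpleGraph.Walk.length_cons]
    omega

lemma exists_grid_walk {n m : ℕ} :
    ∀ (k : ℕ) (u v : Fin n × Fin m), l1 u v = k →
      ∃ p : (grid2 n m).Walk u v, p.length = k := by
  intro k
  induction k with
  | zero =>
    intro u v h
    have huv : u = v := by
      have h1 : (u.1 : ℕ) = v.1 ∧ (u.2 : ℕ) = v.2 := by unfold l1 at h; omega
      exact Prod.ext (Fin.ext h1.1) (Fin.ext h1.2)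
    subst huv
    exact ⟨.nil, rfl⟩
  | succ k ih =>
    intro u v h
    rcases lt_trichotomy (u.1 : ℕ) (v.1 : ℕ) with h1 | h1 | h1
    · set u' : Fin n × Fin m := (⟨(u.1 : ℕ) + 1, lt_of_le_of_lt h1 v.1.isLt⟩, u.2) with hu'
      have hadj : (grid2 n m).Adj u u' := by
        apply grid2_adj_iff.mpr
        simp only [l1, hu']
        omega
      have hl : l1 u' v = k := by
        simp only [l1, hu'] at h ⊢
        omega
      obtain ⟨p, hp⟩ := ih u' v hl
      exact ⟨.cons hadj p, by simp [hp]⟩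
    · rcases lt_trichotomy (u.2 : ℕ) (v.2 : ℕ) with h2 | h2 | h2
      · set u' : Fin n × Fin m := (u.1, ⟨(u.2 : ℕ) + 1, lt_of_le_of_lt h2 v.2.isLt⟩) with hu'
        have hadj : (grid2 n m).Adj u u' := by
          apply grid2_adj_iff.mpr; simp only [l1, hu']; omega
        have hl : l1 u' v = k := by simp only [l1, hu'] at h ⊢; omega
        obtain ⟨p, hp⟩ := ih u' v hl
        exact ⟨.cons hadj p, by simp [hp]⟩
      · exfalso; unfold l1 at h; omega
      · set u' : Fin n × Fin m := (u.1, ⟨(u.2 : ℕ) - 1, lt_of_le_of_lt (Nat.sub_le _ _) u.2.isLt⟩) with hu'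
        have hne : (u.2 : ℕ) ≠ 0 := by omega
        have hadj : (grid2 n m).Adj u u' := by
          apply grid2_adj_iff.mpr; simp only [l1, hu']; omega
        have hl : l1 u' v = k := by simp only [l1, hu'] at h ⊢; omega
        obtain ⟨p, hp⟩ := ih u' v hl
        exact ⟨.cons hadj p, by simp [hp]⟩
    · set u' : Fin n × Fin m := (⟨(u.1 : ℕ) - 1, lt_of_le_of_lt (Nat.sub_le _ _) u.1.isLt⟩, u.2) with hu'
      have hne : (u.1 : ℕ) ≠ 0 := by omega
      have hadj : (grid2 n m).Adj u u' := by
        apply grid2_adj_iff.mpr; simp only [l1, hu']; omega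
      have hl : l1 u' v = k := by simp only [l1, hu'] at h ⊢; omega
      obtain ⟨p, hp⟩ := ih u' v hl
      exact ⟨.cons hadj p, by simp [hp]⟩

lemma grid_dist {n m : ℕ} (u v : Fin n × Fin m) :
    (grid2 n m).dist u v = l1 u v := by
  obtain ⟨p, hp⟩ := exists_grid_walk (l1 u v) u v rfl
  refine le_antisymm (hp ▸ SimpleGraph.dist_le p) ?_
  obtain ⟨q, hq⟩ := (p.reachable).exists_walk_length_eq_dist
  calc l1 u v ≤ q.length := l1_walk_le q
  _ = _ := hq

lemma l1_walk_le_G' {n m : ℕ} {E F A : Fin n × Fin m}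
    (hb1 : l1 E A ≤ l1 F A + 1) (hb2 : l1 F A ≤ l1 E A + 1) :
    ∀ {Z W : Fin n × Fin m}
      (p : ((grid2 n m) ⊔ SimpleGraph.fromEdgeSet {s(E, F)}).Walk Z W),
      (l1 Z A : ℤ) ≤ l1 W A + p.length := by
  intro Z W p
  induction p with
  | nil => simp
  | @cons a b c h p ih =>
    have hstep : l1 a A ≤ l1 b A + 1 := by
      rw [SimpleGraph.sup_adj] at h
      rcases h with hg | he
      · have h1 := grid2_adj_iff.mp hg
        have h2 := l1_triangle a b A
        omega
      · rw [SimpleGraph.fromEdgeSet_adj] at he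
        obtain ⟨hmem, -⟩ := he
        rw [Set.mem_singleton_iff, Sym2.eq_iff] at hmem
        rcases hmem with ⟨rfl, rfl⟩ | ⟨rfl, rfl⟩
        · exact hb1
        · exact hb2
    rw [SimpleGraph.Walk.length_cons]
    push_cast at ih ⊢
    omega

lemma special_empty_iff {n m : ℕ} (E F : Fin n × Fin m) (hEF : E ≠ F) (A : Fin n × Fin m) :
    specialRegion (grid2 n m) ((grid2 n m) ⊔ SimpleGraph.fromEdgeSet {s(E, F)}) A = ∅ ↔
      (l1 E A ≤ l1 F A + 1 ∧ l1 F A ≤ l1 E A + 1) := by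
  have hadjEF : ((grid2 n m) ⊔ SimpleGraph.fromEdgeSet {s(E, F)}).Adj E F := by
    rw [SimpleGraph.sup_adj, SimpleGraph.fromEdgeSet_adj]
    exact Or.inr ⟨Set.mem_singleton _, hEF⟩
  rw [Set.eq_empty_iff_forall_notMem]
  simp only [specialRegion, Set.mem_setOf_eq, not_lt]
  constructor
  · intro hall
    constructor
    · have h := hall E
      rw [grid_dist] at h
      obtain ⟨p, hp⟩ := exists_grid_walk (l1 F A) F A rfl
      have hle := SimpleGraph.dist_le
        (SimpleGraph.Walk.cons hadjEF (p.mapLe le_sup_left))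
      rw [SimpleGraph.Walk.length_cons] at hle
      have hlen : (p.mapLe (le_sup_left :
          grid2 n m ≤ (grid2 n m) ⊔ SimpleGraph.fromEdgeSet {s(E, F)})).length = p.length :=
        by simp [SimpleGraph.Walk.mapLe]
      omega
    · have h := hall F
      rw [grid_dist] at h
      obtain ⟨p, hp⟩ := exists_grid_walk (l1 E A) E A rfl
      have hle := SimpleGraph.dist_le
        (SimpleGraph.Walk.cons hadjEF.symm (p.mapLe le_sup_left))
      rw [SimpleGraph.Walk.length_cons] at hle
      have hlen : (p.mapLe (le_sup_left :
          grid2 n m ≤ (grid2 n m) ⊔ SimpleGraph.fromEdgeSet {s(E, F)})).length = p.length :=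
        by simp [SimpleGraph.Walk.mapLe]
      omega
  · rintro ⟨hb1, hb2⟩ Z
    rw [grid_dist]
    obtain ⟨p0, -⟩ := exists_grid_walk (l1 Z A) Z A rfl
    have hreach : ((grid2 n m) ⊔ SimpleGraph.fromEdgeSet {s(E, F)}).Reachable Z A :=
      (p0.mapLe le_sup_left).reachable
    obtain ⟨q, hq⟩ := hreach.exists_walk_length_eq_dist
    have hkey := l1_walk_le_G' hb1 hb2 q
    have hAA : l1 A A = 0 := by unfold l1; omega
    omega

lemma caseL (a b c d x y : ℚ) (h1 : c ≤ a) (h5 : (2 : ℚ) ≤ (d - b) - (a - c) - 1) (hxc : x < c) :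
    |(|a - x| + |b - y|) - (|c - x| + |d - y|)| ≤ 1 ↔
      ((1 + d + b + c - a) / 2 - 1 ≤ y ∧ y ≤ (1 + d + b + c - a) / 2) := by
  rw [abs_of_pos (show (0:ℚ) < a - x by linarith),
    abs_of_pos (show (0:ℚ) < c - x by linarith), abs_le]
  rcases abs_cases (b - y) with ⟨e2, s2⟩ | ⟨e2, s2⟩ <;>
  rcases abs_cases (d - y) with ⟨e4, s4⟩ | ⟨e4, s4⟩ <;>
  rw [e2, e4] <;>
  (constructor <;> intro h <;> obtain ⟨p, q⟩ := h <;> exact ⟨by linarith, by linarith⟩)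

lemma caseM (a b c d x y : ℚ) (h1 : c ≤ a) (h5 : (2 : ℚ) ≤ (d - b) - (a - c) - 1)
    (hxc : c ≤ x) (hxa : x ≤ a) :
    |(|a - x| + |b - y|) - (|c - x| + |d - y|)| ≤ 1 ↔
      (c - (1 + d + b + c - a) / 2 ≤ x - y ∧ x - y ≤ c - (1 + d + b + c - a) / 2 + 1) := by
  rw [abs_of_nonneg (show (0:ℚ) ≤ a - x by linarith),
    abs_of_nonpos (show c - x ≤ (0:ℚ) by linarith), abs_le]
  rcases abs_cases (b - y) with ⟨e2, s2⟩ | ⟨e2, s2⟩ <;>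
  rcases abs_cases (d - y) with ⟨e4, s4⟩ | ⟨e4, s4⟩ <;>
  rw [e2, e4] <;>
  (constructor <;> intro h <;> obtain ⟨p, q⟩ := h <;> exact ⟨by linarith, by linarith⟩)

lemma caseR (a b c d x y : ℚ) (h1 : c ≤ a) (h5 : (2 : ℚ) ≤ (d - b) - (a - c) - 1) (hxa : a < x) :
    |(|a - x| + |b - y|) - (|c - x| + |d - y|)| ≤ 1 ↔
      ((1 + d + b + a - c) / 2 - 1 ≤ y ∧ y ≤ (1 + d + b + a - c) / 2) := by
  rw [abs_of_neg (show a - x < (0:ℚ) by linarith),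
    abs_of_neg (show c - x < (0:ℚ) by linarith), abs_le]
  rcases abs_cases (b - y) with ⟨e2, s2⟩ | ⟨e2, s2⟩ <;>
  rcases abs_cases (d - y) with ⟨e4, s4⟩ | ⟨e4, s4⟩ <;>
  rw [e2, e4] <;>
  (constructor <;> intro h <;> obtain ⟨p, q⟩ := h <;> exact ⟨by linarith, by linarith⟩)

lemma strip_arith (a b c d x y : ℚ) (h1 : c ≤ a) (h5 : (2 : ℚ) ≤ (d - b) - (a - c) - 1) :
    |(|a - x| + |b - y|) - (|c - x| + |d - y|)| ≤ 1 ↔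
      ((x < c ∧ (1 + d + b + c - a) / 2 - 1 ≤ y ∧ y ≤ (1 + d + b + c - a) / 2) ∨
       (c ≤ x ∧ x ≤ a ∧ c - (1 + d + b + c - a) / 2 ≤ x - y ∧
          x - y ≤ c - (1 + d + b + c - a) / 2 + 1) ∨
       (a < x ∧ (1 + d + b + a - c) / 2 - 1 ≤ y ∧ y ≤ (1 + d + b + a - c) / 2)) := by
  rcases lt_or_ge x c with hxc | hxc
  · rw [caseL a b c d x y h1 h5 hxc]
    constructor
    · intro h; exact Or.inl ⟨hxc, h.1, h.2⟩
    · rintro (⟨-, hy1, hy2⟩ | ⟨hcx, -⟩ | ⟨hax, -⟩)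
      · exact ⟨hy1, hy2⟩
      · exact absurd hcx (by linarith)
      · exact absurd hax (by linarith)
  · rcases le_or_gt x a with hxa | hxa
    · rw [caseM a b c d x y h1 h5 hxc hxa]
      constructor
      · intro h; exact Or.inr (Or.inl ⟨hxc, hxa, h.1, h.2⟩)
      · rintro (⟨hxc', -⟩ | ⟨-, -, hy1, hy2⟩ | ⟨hax, -⟩)
        · exact absurd hxc' (by linarith)
        · exact ⟨hy1, hy2⟩
        · exact absurd hax (by linarith)
    · rw [caseR a b c d x y h1 h5 hxa]
      constructor
      · intro h; exact Or.inr (Or.inr ⟨hxa, h.1, h.2⟩)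
      · rintro (⟨hxc', -⟩ | ⟨-, hxa', -⟩ | ⟨-, hy1, hy2⟩)
        · exact absurd hxc' (by linarith)
        · exact absurd hxa' (by linarith)
        · exact ⟨hy1, hy2⟩

lemma l1_cast {n m : ℕ} (u v : Fin n × Fin m) :
    ((l1 u v : ℕ) : ℚ) = |Xc u - Xc v| + |Yc u - Yc v| := by
  unfold l1 Xc Yc
  push_cast [Nat.cast_natAbs]
  ring_nf

end AuxGridProof

/-- Claim 10 (exact characterization of the normal region): under the
symmetry-breaking and edge-case-removal assumptions, with
`α = (1 + y_F + y_E + x_F − x_E)/2` and `β = (1 + y_F + y_E + x_E − x_F)/2`,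
the normal region of the grid-plus-edge is exactly the union of the three strips
`{x < x_F, α − 1 ≤ y ≤ α}`, `{x_F ≤ x ≤ x_E, x_F − α ≤ x − y ≤ x_F − α + 1}` and
`{x > x_E, β − 1 ≤ y ≤ β}`. -/
theorem stmt_16 {m n : ℕ}
    (E F : Fin n × Fin m)
    (hdist : 2 ≤ (grid2 n m).dist E F)
    (h1 : Xc F ≤ Xc E) (h2 : Yc E ≤ Yc F)
    (h3 : Xc E - Xc F ≤ Yc F - Yc E)
    (h4 : Xc F ≠ Xc E)
    (h5 : (2 : ℚ) ≤ (Yc F - Yc E) - (Xc E - Xc F) - 1)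
    (h6 : ¬ onBoundary E) (h7 : ¬ onBoundary F)
    (G' : SimpleGraph (Fin n × Fin m))
    (hG' : G' = grid2 n m ⊔ SimpleGraph.fromEdgeSet {s(E, F)}) :
    let α : ℚ := (1 + Yc F + Yc E + Xc F - Xc E) / 2
    let β : ℚ := (1 + Yc F + Yc E + Xc E - Xc F) / 2
    normalRegion (grid2 n m) G' =
      {v : Fin n × Fin m |
        (Xc v < Xc F ∧ α - 1 ≤ Yc v ∧ Yc v ≤ α) ∨
        (Xc F ≤ Xc v ∧ Xc v ≤ Xc E ∧
          Xc F - α ≤ Xc v - Yc v ∧ Xc v - Yc v ≤ Xc F - α + 1) ∨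
        (Xc E < Xc v ∧ β - 1 ≤ Yc v ∧ Yc v ≤ β)} := by
  intro α β
  subst hG'
  have hEF : E ≠ F := by
    rintro rfl
    rw [SimpleGraph.dist_self] at hdist
    omega
  ext v
  simp only [normalRegion, Set.mem_setOf_eq]
  rw [special_empty_iff E F hEF v]
  have hb1 := l1_cast E v
  have hb2 := l1_cast F v
  have key := strip_arith (Xc E) (Yc E) (Xc F) (Yc F) (Xc v) (Yc v) h1 h5
  have hα : α = (1 + Yc F + Yc E + Xc F - Xc E) / 2 := rfl
  have hβ : β = (1 + Yc F + Yc E + Xc E - Xc F) / 2 := rfl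
  rw [hα, hβ, ← key, ← hb1, ← hb2, abs_le]
  constructor
  · rintro ⟨q1, q2⟩
    have c1 : ((l1 E v : ℕ) : ℚ) ≤ ((l1 F v : ℕ) : ℚ) + 1 := by exact_mod_cast q1
    have c2 : ((l1 F v : ℕ) : ℚ) ≤ ((l1 E v : ℕ) : ℚ) + 1 := by exact_mod_cast q2
    constructor <;> linarith
  · rintro ⟨q1, q2⟩
    constructor
    · exact_mod_cast (show ((l1 E v : ℕ) : ℚ) ≤ ((l1 F v : ℕ) : ℚ) + 1 by linarith)
    · exact_mod_cast (show ((l1 F v : ℕ) : ℚ) ≤ ((l1 E v : ℕ) : ℚ) + 1 by linarith)
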